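/- Define on the set D = ℤ × ℤ × ℤ the operations (k₁, k₂, k₃) + (t₁, t₂, t₃) = (k₁ + t₁, k₂ + t₂, k₃ + t₃) and (k₁, k₂, k₃)·(t₁, t₂, t₃) = (k₁ + t₁, k₁t₁ + k₂ + t₂, k₃ + t₃ + ((2k₂ + k₁ − k₁²)/2)·t₁), where (k₁ − k₁²)/2 is an integer. Then D with these operations is a left brace, D is generated as a brace by one element, and D³ = ⟨0⟩ = D^{(4)} with D^{(3)} ≠ ⟨0⟩. -/

import Mathlib

/-- A left brace: `(A, +)` is an abelian group, `(A, *)` is a group, and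
`a * (b + c) = a * b + a * c - a` for all `a b c`. -/
class LeftBrace (A : Type*) extends AddCommGroup A, Group A where
  mul_add_eq : ∀ a b c : A, a * (b + c) = a * b + a * c - a

namespace LeftBrace

variable {A : Type*} [LeftBrace A]

/-- The star operation of a left brace: `a ⋆ b = a * b - a - b`. -/
def star (a b : A) : A := a * b - a - b

/-- `K ⋆ L`: the subgroup of the additive group of `A` generated by all
`x ⋆ y` with `x ∈ K`, `y ∈ L`. -/
def setStar (K L : Set A) : AddSubgroup A :=
  AddSubgroup.closure (Set.image2 star K L)

/-- A subbrace of `A`: a subset that is simultaneously a subgroup of the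
additive group of `A` and a subgroup of the multiplicative group of `A`. -/
def IsSubbrace (S : Set A) : Prop :=
  (0 : A) ∈ S ∧ (∀ x ∈ S, ∀ y ∈ S, x + y ∈ S) ∧ (∀ x ∈ S, -x ∈ S) ∧
    (1 : A) ∈ S ∧ (∀ x ∈ S, ∀ y ∈ S, x * y ∈ S) ∧ (∀ x ∈ S, x⁻¹ ∈ S)

/-- A left ideal of `A`: a subbrace `S` with `a ⋆ b ∈ S` for all `a ∈ A`, `b ∈ S`. -/
def IsLeftIdeal (S : Set A) : Prop :=
  IsSubbrace S ∧ ∀ a : A, ∀ b ∈ S, star a b ∈ S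

/-- An ideal of `A`: a subbrace `S` with `a ⋆ z ∈ S` and `z ⋆ a ∈ S`
for all `a ∈ A`, `z ∈ S`. -/
def IsIdeal (S : Set A) : Prop :=
  IsSubbrace S ∧ ∀ a : A, ∀ z ∈ S, star a z ∈ S ∧ star z a ∈ S

/-- The left series of the brace `A`, with the indexing shifted by one:
`leftSeriesN A 0 = A¹ = A` and `leftSeriesN A n = Aⁿ⁺¹ = A ⋆ Aⁿ`.
In particular `leftSeriesN A 1 = A²` and `leftSeriesN A 2 = A³`. -/
def leftSeriesN (A : Type*) [LeftBrace A] : ℕ → AddSubgroup A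
  | 0 => ⊤
  | n + 1 => setStar Set.univ ((leftSeriesN A n : AddSubgroup A) : Set A)

/-- The right series of the brace `A`, with the indexing shifted by one:
`rightSeriesN A 0 = A⁽¹⁾ = A` and `rightSeriesN A n = A⁽ⁿ⁺¹⁾ = A⁽ⁿ⁾ ⋆ A`.
In particular `rightSeriesN A 2 = A⁽³⁾` and `rightSeriesN A 3 = A⁽⁴⁾`. -/
def rightSeriesN (A : Type*) [LeftBrace A] : ℕ → AddSubgroup A
  | 0 => ⊤
  | n + 1 => setStar ((rightSeriesN A n : AddSubgroup A) : Set A) Set.univ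

end LeftBrace

open LeftBrace

def ThreeBrace : Type := ℤ × ℤ × ℤ

namespace ThreeBrace

/-- `2·k₂ + k₁ − k₁²` is always even, so its integer division by `2` is exact. -/
private lemma key (k₁ k₂ : ℤ) :
    2 * ((2 * k₂ + k₁ - k₁ ^ 2) / 2) = 2 * k₂ + k₁ - k₁ ^ 2 := by
  obtain ⟨c, hc⟩ := Int.even_mul_succ_self (k₁ - 1)
  have h : 2 * k₂ + k₁ - k₁ ^ 2 = 2 * (k₂ - c) := by linear_combination -hc
  rw [h]; omega

private lemma key0 (k₁ : ℤ) : 2 * ((k₁ - k₁ ^ 2) / 2) = k₁ - k₁ ^ 2 := by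
  have h := key k₁ 0
  norm_num at h
  exact h

instance : AddCommGroup ThreeBrace := inferInstanceAs (AddCommGroup (ℤ × ℤ × ℤ))

instance instGroup : Group ThreeBrace where
  mul x y := ((x.1 + y.1, x.1 * y.1 + x.2.1 + y.2.1,
      x.2.2 + y.2.2 + ((2 * x.2.1 + x.1 - x.1 ^ 2) / 2) * y.1) : ℤ × ℤ × ℤ)
  one := ((0, 0, 0) : ℤ × ℤ × ℤ)
  inv x := ((-x.1, x.1 ^ 2 - x.2.1,
      x.1 * x.2.1 + ((x.1 - x.1 ^ 2) / 2) * x.1 - x.2.2) : ℤ × ℤ × ℤ)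
  mul_assoc a b c := by
    show ((a.1 + b.1 + c.1,
        (a.1 + b.1) * c.1 + (a.1 * b.1 + a.2.1 + b.2.1) + c.2.1,
        (a.2.2 + b.2.2 + ((2 * a.2.1 + a.1 - a.1 ^ 2) / 2) * b.1) + c.2.2 +
          ((2 * (a.1 * b.1 + a.2.1 + b.2.1) + (a.1 + b.1) - (a.1 + b.1) ^ 2) / 2) * c.1) : ℤ × ℤ × ℤ)
      = (a.1 + (b.1 + c.1),
        a.1 * (b.1 + c.1) + a.2.1 + (b.1 * c.1 + b.2.1 + c.2.1),
        a.2.2 + (b.2.2 + c.2.2 + ((2 * b.2.1 + b.1 - b.1 ^ 2) / 2) * c.1) +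
          ((2 * a.2.1 + a.1 - a.1 ^ 2) / 2) * (b.1 + c.1))
    refine Prod.ext (by dsimp; ring) (Prod.ext (by dsimp; ring) ?_)
    dsimp
    have h1 := key (a.1 + b.1) (a.1 * b.1 + a.2.1 + b.2.1)
    have h2 := key a.1 a.2.1
    have h3 := key b.1 b.2.1
    have h : 2 * ((a.2.2 + b.2.2 + ((2 * a.2.1 + a.1 - a.1 ^ 2) / 2) * b.1) + c.2.2 +
          ((2 * (a.1 * b.1 + a.2.1 + b.2.1) + (a.1 + b.1) - (a.1 + b.1) ^ 2) / 2) * c.1)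
        = 2 * (a.2.2 + (b.2.2 + c.2.2 + ((2 * b.2.1 + b.1 - b.1 ^ 2) / 2) * c.1) +
          ((2 * a.2.1 + a.1 - a.1 ^ 2) / 2) * (b.1 + c.1)) := by
      linear_combination c.1 * h1 - c.1 * h2 - c.1 * h3
    linarith
  one_mul a := by
    show ((0 + a.1, 0 * a.1 + 0 + a.2.1,
        0 + a.2.2 + ((2 * 0 + 0 - 0 ^ 2) / 2) * a.1) : ℤ × ℤ × ℤ) = (a.1, a.2.1, a.2.2)
    refine Prod.ext (by dsimp; ring) (Prod.ext (by dsimp; ring) ?_)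
    dsimp; norm_num
  mul_one a := by
    show ((a.1 + 0, a.1 * 0 + a.2.1 + 0,
        a.2.2 + 0 + ((2 * a.2.1 + a.1 - a.1 ^ 2) / 2) * 0) : ℤ × ℤ × ℤ) = (a.1, a.2.1, a.2.2)
    refine Prod.ext (by dsimp; ring) (Prod.ext (by dsimp; ring) ?_)
    dsimp; ring
  inv_mul_cancel a := by
    show ((-a.1 + a.1, -a.1 * a.1 + (a.1 ^ 2 - a.2.1) + a.2.1,
        (a.1 * a.2.1 + ((a.1 - a.1 ^ 2) / 2) * a.1 - a.2.2) + a.2.2 +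
          ((2 * (a.1 ^ 2 - a.2.1) + -a.1 - (-a.1) ^ 2) / 2) * a.1) : ℤ × ℤ × ℤ)
      = ((0, 0, 0) : ℤ × ℤ × ℤ)
    refine Prod.ext (by dsimp; ring) (Prod.ext (by dsimp; ring) ?_)
    dsimp
    have h4 := key (-a.1) (a.1 ^ 2 - a.2.1)
    have h5 := key0 a.1
    have h : 2 * ((a.1 * a.2.1 + ((a.1 - a.1 ^ 2) / 2) * a.1 - a.2.2) + a.2.2 +
          ((2 * (a.1 ^ 2 - a.2.1) + -a.1 - (-a.1) ^ 2) / 2) * a.1) = 2 * 0 := by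
      linear_combination a.1 * h5 + a.1 * h4
    linarith

instance instLeftBrace : LeftBrace ThreeBrace :=
  { (inferInstanceAs (AddCommGroup ThreeBrace) : AddCommGroup ThreeBrace),
    (inferInstanceAs (Group ThreeBrace) : Group ThreeBrace) with
    mul_add_eq := fun a b c => by
      show ((a.1 + (b.1 + c.1), a.1 * (b.1 + c.1) + a.2.1 + (b.2.1 + c.2.1),
          a.2.2 + (b.2.2 + c.2.2) + ((2 * a.2.1 + a.1 - a.1 ^ 2) / 2) * (b.1 + c.1)) : ℤ × ℤ × ℤ)
        = ((a.1 + b.1) + (a.1 + c.1) - a.1,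
            (a.1 * b.1 + a.2.1 + b.2.1) + (a.1 * c.1 + a.2.1 + c.2.1) - a.2.1,
            (a.2.2 + b.2.2 + ((2 * a.2.1 + a.1 - a.1 ^ 2) / 2) * b.1) +
              (a.2.2 + c.2.2 + ((2 * a.2.1 + a.1 - a.1 ^ 2) / 2) * c.1) - a.2.2)
      refine Prod.ext (by dsimp; ring) (Prod.ext (by dsimp; ring) (by dsimp; ring)) }

end ThreeBrace


namespace ThreeBrace

private lemma sub_fst (a b : ThreeBrace) : (a - b).1 = a.1 - b.1 := rfl
private lemma sub_snd (a b : ThreeBrace) : (a - b).2.1 = a.2.1 - b.2.1 := rfl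
private lemma sub_thd (a b : ThreeBrace) : (a - b).2.2 = a.2.2 - b.2.2 := rfl
private lemma add_fst (a b : ThreeBrace) : (a + b).1 = a.1 + b.1 := rfl
private lemma add_snd (a b : ThreeBrace) : (a + b).2.1 = a.2.1 + b.2.1 := rfl
private lemma add_thd (a b : ThreeBrace) : (a + b).2.2 = a.2.2 + b.2.2 := rfl
private lemma smul_fst (n : ℤ) (a : ThreeBrace) : (n • a).1 = n • a.1 := rfl
private lemma smul_snd (n : ℤ) (a : ThreeBrace) : (n • a).2.1 = n • a.2.1 := rfl
private lemma smul_thd (n : ℤ) (a : ThreeBrace) : (n • a).2.2 = n • a.2.2 := rfl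
private lemma zero_fst : (0 : ThreeBrace).1 = 0 := rfl
private lemma zero_snd : (0 : ThreeBrace).2.1 = 0 := rfl
private lemma zero_thd : (0 : ThreeBrace).2.2 = 0 := rfl
private lemma mul_fst (a b : ThreeBrace) : (a * b).1 = a.1 + b.1 := rfl
private lemma mul_snd (a b : ThreeBrace) : (a * b).2.1 = a.1 * b.1 + a.2.1 + b.2.1 := rfl
private lemma mul_thd (a b : ThreeBrace) :
    (a * b).2.2 = a.2.2 + b.2.2 + ((2 * a.2.1 + a.1 - a.1 ^ 2) / 2) * b.1 := rfl

private lemma star_eq (x y : ThreeBrace) :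
    LeftBrace.star x y
      = (((0, x.1 * y.1, ((2 * x.2.1 + x.1 - x.1 ^ 2) / 2) * y.1) : ℤ × ℤ × ℤ) : ThreeBrace) := by
  show x * y - x - y = _
  refine Prod.ext ?_ (Prod.ext ?_ ?_) <;>
    simp [sub_fst, sub_snd, sub_thd, mul_fst, mul_snd, mul_thd] <;> ring

private def dd : ThreeBrace := ((1, 0, 0) : ℤ × ℤ × ℤ)
private def e2 : ThreeBrace := ((0, 1, 0) : ℤ × ℤ × ℤ)
private def e3 : ThreeBrace := ((0, 0, 1) : ℤ × ℤ × ℤ)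

private lemma star_dd : LeftBrace.star dd dd = e2 := by
  rw [star_eq]
  refine Prod.ext ?_ (Prod.ext ?_ ?_) <;> simp [dd, e2]

private lemma star_e2d : LeftBrace.star e2 dd = e3 := by
  rw [star_eq]
  refine Prod.ext ?_ (Prod.ext ?_ ?_) <;> simp [dd, e2, e3]

private lemma star_zero_of_fst {a b : ThreeBrace} (hb : b.1 = 0) : LeftBrace.star a b = 0 := by
  rw [star_eq, hb]
  refine Prod.ext ?_ (Prod.ext ?_ ?_) <;> simp [zero_fst, zero_snd, zero_thd]

private lemma star_zero_of_left {a b : ThreeBrace} (h1 : a.1 = 0) (h2 : a.2.1 = 0) :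
    LeftBrace.star a b = 0 := by
  rw [star_eq, h1, h2]
  refine Prod.ext ?_ (Prod.ext ?_ ?_) <;> simp [zero_fst, zero_snd, zero_thd]

private def fstHom : ThreeBrace →+ ℤ :=
  { toFun := fun p => p.1, map_zero' := rfl, map_add' := fun _ _ => rfl }

private def sndHom : ThreeBrace →+ ℤ :=
  { toFun := fun p => p.2.1, map_zero' := rfl, map_add' := fun _ _ => rfl }

private lemma star_mem_fst_ker (K L : Set ThreeBrace) : setStar K L ≤ fstHom.ker := by
  rw [setStar, AddSubgroup.closure_le]
  rintro _ ⟨a, -, b, -, rfl⟩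
  show fstHom (LeftBrace.star a b) = 0
  rw [star_eq]
  rfl

private lemma right1_fst : ∀ y ∈ rightSeriesN ThreeBrace 1, y.1 = 0 := fun _ hy =>
  star_mem_fst_ker _ _ hy

private lemma right2_fst : ∀ y ∈ rightSeriesN ThreeBrace 2, y.1 = 0 := fun _ hy =>
  star_mem_fst_ker _ _ hy

private lemma left1_fst : ∀ y ∈ leftSeriesN ThreeBrace 1, y.1 = 0 := fun _ hy =>
  star_mem_fst_ker _ _ hy

private lemma right2_snd : ∀ y ∈ rightSeriesN ThreeBrace 2, y.2.1 = 0 := by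
  have h : rightSeriesN ThreeBrace 2 ≤ sndHom.ker := by
    show setStar _ _ ≤ _
    rw [setStar, AddSubgroup.closure_le]
    rintro _ ⟨a, ha, b, -, rfl⟩
    show sndHom (LeftBrace.star a b) = 0
    rw [star_eq]
    show a.1 * b.1 = 0
    rw [right1_fst a ha]
    ring
  exact h

end ThreeBrace

/-- **Theorem B2, first part.** `D = ℤ × ℤ × ℤ` with the
operations `(k₁,k₂,k₃)+(t₁,t₂,t₃) = (k₁+t₁, k₂+t₂, k₃+t₃)` and
`(k₁,k₂,k₃)·(t₁,t₂,t₃) = (k₁+t₁, k₁t₁+k₂+t₂, k₃+t₃+((2k₂+k₁−k₁²)/2)·t₁)`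
(the integer division is exact since `2k₂ + k₁ − k₁²` is even) is a left brace
(witnessed by the instance `ThreeBrace.instLeftBrace` above, whose operations
are recorded in the first two conjuncts), `D` is generated as a brace by one
element, and `D³ = ⟨0⟩ = D⁽⁴⁾` with `D⁽³⁾ ≠ ⟨0⟩` (here
`D³ = leftSeriesN ThreeBrace 2`, `D⁽⁴⁾ = rightSeriesN ThreeBrace 3` and
`D⁽³⁾ = rightSeriesN ThreeBrace 2`). -/
theorem threeBrace_structure :
    (∀ x y : ThreeBrace,
      x + y = ((x.1 + y.1, x.2.1 + y.2.1, x.2.2 + y.2.2) : ℤ × ℤ × ℤ)) ∧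
    (∀ x y : ThreeBrace,
      x * y = ((x.1 + y.1, x.1 * y.1 + x.2.1 + y.2.1,
        x.2.2 + y.2.2 + ((2 * x.2.1 + x.1 - x.1 ^ 2) / 2) * y.1) : ℤ × ℤ × ℤ)) ∧
    (∃ d : ThreeBrace, ∀ S : Set ThreeBrace, IsSubbrace S → d ∈ S → S = Set.univ) ∧
    leftSeriesN ThreeBrace 2 = ⊥ ∧ rightSeriesN ThreeBrace 3 = ⊥ ∧
    rightSeriesN ThreeBrace 2 ≠ ⊥ := by
  refine ⟨fun x y => rfl, fun x y => rfl, ?_, ?_, ?_, ?_⟩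
  · -- generated by one element
    refine ⟨ThreeBrace.dd, fun S hS hd => ?_⟩
    obtain ⟨h0, hadd, hneg, h1, hmul, hinv⟩ := hS
    set T : AddSubgroup ThreeBrace :=
      { carrier := S
        zero_mem' := h0
        add_mem' := fun ha hb => hadd _ ha _ hb
        neg_mem' := fun ha => hneg _ ha } with hT
    have hTd : ThreeBrace.dd ∈ T := hd
    have he2 : ThreeBrace.e2 ∈ T := by
      have h : LeftBrace.star ThreeBrace.dd ThreeBrace.dd ∈ T :=
        T.sub_mem (T.sub_mem (hmul _ hTd _ hTd) hTd) hTd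
      rwa [ThreeBrace.star_dd] at h
    have he3 : ThreeBrace.e3 ∈ T := by
      have h : LeftBrace.star ThreeBrace.e2 ThreeBrace.dd ∈ T :=
        T.sub_mem (T.sub_mem (hmul _ he2 _ hTd) he2) hTd
      rwa [ThreeBrace.star_e2d] at h
    refine Set.eq_univ_iff_forall.2 fun p => ?_
    have hsum : p = p.1 • ThreeBrace.dd + p.2.1 • ThreeBrace.e2 + p.2.2 • ThreeBrace.e3 := by
      refine Prod.ext ?_ (Prod.ext ?_ ?_) <;>
        simp [ThreeBrace.add_fst, ThreeBrace.add_snd, ThreeBrace.add_thd,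
          ThreeBrace.smul_fst, ThreeBrace.smul_snd, ThreeBrace.smul_thd,
          ThreeBrace.dd, ThreeBrace.e2, ThreeBrace.e3] <;>
        (change _ = _ * _ + _ * _ + _ * _; ring)
    have hp : p ∈ T := by
      rw [hsum]
      exact T.add_mem (T.add_mem (T.zsmul_mem hTd _) (T.zsmul_mem he2 _)) (T.zsmul_mem he3 _)
    exact hp
  · -- leftSeriesN 2 = ⊥
    rw [eq_bot_iff]
    show setStar _ _ ≤ _
    rw [setStar, AddSubgroup.closure_le]
    rintro _ ⟨a, -, b, hb, rfl⟩
    rw [ThreeBrace.star_zero_of_fst (ThreeBrace.left1_fst b hb)]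
    exact Set.mem_singleton _
  · -- rightSeriesN 3 = ⊥
    rw [eq_bot_iff]
    show setStar _ _ ≤ _
    rw [setStar, AddSubgroup.closure_le]
    rintro _ ⟨a, ha, b, -, rfl⟩
    rw [ThreeBrace.star_zero_of_left (ThreeBrace.right2_fst a ha) (ThreeBrace.right2_snd a ha)]
    exact Set.mem_singleton _
  · -- rightSeriesN 2 ≠ ⊥
    intro h
    have h1 : ThreeBrace.e2 ∈ rightSeriesN ThreeBrace 1 := by
      rw [← ThreeBrace.star_dd]
      exact AddSubgroup.subset_closure (Set.mem_image2_of_mem trivial trivial)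
    have hmem2 : ThreeBrace.e3 ∈ rightSeriesN ThreeBrace 2 := by
      rw [← ThreeBrace.star_e2d]
      exact AddSubgroup.subset_closure (Set.mem_image2_of_mem h1 trivial)
    rw [h] at hmem2
    have h0 : ThreeBrace.e3 = 0 := hmem2
    have h2 := congrArg (fun p : ThreeBrace => p.2.2) h0
    simp [ThreeBrace.e3, ThreeBrace.zero_thd] at h2
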